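/- Let A be a C*-algebra and let T : A → A be a positive bounded linear operator. Then for every λ ∈ ℂ with |λ| > r(T) one has the operator-norm bound ‖(λ·id − T)⁻¹‖ ≤ 16 · ‖(|λ|·id − T)⁻¹‖. -/

import Mathlib

set_option linter.unusedSectionVars false

open scoped ENNReal NNReal

section BanachAlgebra

variable {B : Type*} [NormedRing B] [NormedAlgebra ℂ B] [CompleteSpace B]

/-- Neumann series for the resolvent beyond the spectral radius, together with
absolute convergence. -/
theorem aux_resolvent_hasSum (a : B) (l : ℂ) (h : spectralRadius ℂ a < (‖l‖₊ : ℝ≥0∞)) :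
    HasSum (fun n => l⁻¹ ^ (n + 1) • a ^ n) (resolvent a l) ∧
      Summable (fun n => ‖l‖⁻¹ ^ (n + 1) * ‖a ^ n‖) := by
  have hl : l ≠ 0 := by
    rintro rfl
    simp at h
  have hinv : (‖l⁻¹‖₊ : ℝ≥0∞) < (spectralRadius ℂ a)⁻¹ := by
    rw [nnnorm_inv, ENNReal.coe_inv (by simpa using hl)]
    exact ENNReal.inv_lt_inv.mpr h
  obtain ⟨r, hr1, hr2⟩ := ENNReal.lt_iff_exists_nnreal_btwn.mp hinv
  have hr0 : 0 < r := by
    have : (0 : ℝ≥0∞) < r := lt_of_le_of_lt zero_le hr1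
    exact_mod_cast this
  have H₁ := (spectrum.differentiableOn_inverse_one_sub_smul hr2).hasFPowerSeriesOnBall hr0
  have Hp := (spectrum.hasFPowerSeriesOnBall_inverse_one_sub_smul ℂ a).exchange_radius H₁
  have hmem : l⁻¹ ∈ Metric.eball (0 : ℂ) r := by
    rw [Metric.mem_eball, edist_zero_right]
    exact hr1
  have hs := Hp.hasSum hmem
  simp only [ContinuousMultilinearMap.mkPiRing_apply, Finset.prod_const, Finset.card_univ,
    Fintype.card_fin, zero_add] at hs
  have hu : IsUnit (1 - l⁻¹ • a) := spectrum.isUnit_one_sub_smul_of_lt_inv_radius hinv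
  obtain ⟨u, hu'⟩ := hu
  have key : resolvent a l = l⁻¹ • Ring.inverse (1 - l⁻¹ • a) := by
    have halg : algebraMap ℂ B l - a = l • (1 - l⁻¹ • a) := by
      rw [smul_sub, smul_smul, mul_inv_cancel₀ hl, one_smul, Algebra.algebraMap_eq_smul_one]
    let w : Bˣ := ⟨l • (u : B), l⁻¹ • ((u⁻¹ : Bˣ) : B),
      by rw [smul_mul_smul_comm, mul_inv_cancel₀ hl, u.mul_inv, one_smul],
      by rw [smul_mul_smul_comm, inv_mul_cancel₀ hl, u.inv_mul, one_smul]⟩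
    rw [resolvent, halg, ← hu', show l • (u : B) = (w : B) from rfl, Ring.inverse_unit,
      Ring.inverse_unit]
    rfl
  constructor
  · have := hs.const_smul l⁻¹
    rw [← key] at this
    refine this.congr_fun fun n => ?_
    rw [smul_smul, pow_succ']
  · set p : FormalMultilinearSeries ℂ ℂ B :=
      fun n => ContinuousMultilinearMap.mkPiRing ℂ (Fin n) (a ^ n) with hp
    have hrad : l⁻¹ ∈ EMetric.ball (0 : ℂ) p.radius :=
      EMetric.ball_subset_ball Hp.r_le hmem
    have hsn := p.summable_norm_apply hrad
    simp only [hp, ContinuousMultilinearMap.mkPiRing_apply, Finset.prod_const, Finset.card_univ,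
      Fintype.card_fin, norm_smul, norm_pow, norm_inv] at hsn
    have := hsn.mul_left ‖l‖⁻¹
    refine this.congr fun n => ?_
    rw [pow_succ', mul_assoc]

end BanachAlgebra

section CStar

variable {A : Type*} [NonUnitalCStarAlgebra A] [PartialOrder A] [StarOrderedRing A]

theorem aux_norm_posPart_le (a : A) (ha : IsSelfAdjoint a) : ‖a⁺‖ ≤ ‖a‖ := by
  rw [CFC.posPart_def]
  refine norm_cfcₙ_le fun x hx => ?_
  calc ‖x⁺‖ = x⁺ := Real.norm_of_nonneg (posPart_nonneg x)
    _ ≤ |x| := sup_le (le_abs_self x) (abs_nonneg x)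
    _ = ‖(id : ℝ → ℝ) x‖ := rfl
    _ ≤ ‖cfcₙ (id : ℝ → ℝ) a‖ := norm_apply_le_norm_cfcₙ id a hx (by fun_prop) rfl ha
    _ = ‖a‖ := by rw [cfcₙ_id ℝ a]

theorem aux_norm_negPart_le (a : A) (ha : IsSelfAdjoint a) : ‖a⁻‖ ≤ ‖a‖ := by
  rw [CFC.negPart_def]
  refine norm_cfcₙ_le fun x hx => ?_
  calc ‖x⁻‖ = x⁻ := Real.norm_of_nonneg (negPart_nonneg x)
    _ ≤ |x| := sup_le (neg_le_abs x) (abs_nonneg x)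
    _ = ‖(id : ℝ → ℝ) x‖ := rfl
    _ ≤ ‖cfcₙ (id : ℝ → ℝ) a‖ := norm_apply_le_norm_cfcₙ id a hx (by fun_prop) rfl ha
    _ = ‖a‖ := by rw [cfcₙ_id ℝ a]

theorem aux_norm_realPart_le (x : A) : ‖(realPart x : A)‖ ≤ ‖x‖ := by
  rw [realPart_apply_coe]
  calc ‖(2 : ℝ)⁻¹ • (x + star x)‖ ≤ 2⁻¹ * (‖x‖ + ‖star x‖) := by
        rw [norm_smul]
        gcongr
        · simp [Real.norm_eq_abs]
        · exact norm_add_le _ _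
    _ = ‖x‖ := by rw [norm_star]; ring

theorem aux_norm_imaginaryPart_le (x : A) : ‖(imaginaryPart x : A)‖ ≤ ‖x‖ := by
  rw [imaginaryPart_apply_coe]
  calc ‖-Complex.I • (2 : ℝ)⁻¹ • (x - star x)‖ = ‖(2 : ℝ)⁻¹ • (x - star x)‖ := by
        rw [norm_smul]; simp
    _ ≤ 2⁻¹ * (‖x‖ + ‖star x‖) := by
        rw [norm_smul]
        gcongr
        · simp [Real.norm_eq_abs]
        · exact norm_sub_le _ _
    _ = ‖x‖ := by rw [norm_star]; ring

/-- The key estimate on positive elements. -/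
theorem aux_pos (T : A →L[ℂ] A) (hT : ∀ x : A, 0 ≤ x → 0 ≤ T x)
    (lam : ℂ) (hlam : spectralRadius ℂ T < (‖lam‖₊ : ENNReal))
    (y : A) (hy : 0 ≤ y) :
    ‖resolvent T lam y‖ ≤ 4 * (‖resolvent T ((‖lam‖ : ℝ) : ℂ)‖ * ‖y‖) := by
  have hrnn : spectralRadius ℂ T < (‖((‖lam‖ : ℝ) : ℂ)‖₊ : ℝ≥0∞) := by
    rwa [Complex.nnnorm_real, nnnorm_norm]
  obtain ⟨hsum_lam, hnsum⟩ := aux_resolvent_hasSum T lam hlam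
  obtain ⟨hsum_r, -⟩ := aux_resolvent_hasSum T ((‖lam‖ : ℝ) : ℂ) hrnn
  -- the sequence of positive elements
  have ha : ∀ n : ℕ, 0 ≤ (T ^ n) y := by
    intro n
    induction n with
    | zero => simpa using hy
    | succ n ih =>
      rw [pow_succ']
      exact hT _ ih
  set d : ℕ → ℝ := fun n => ‖lam‖⁻¹ ^ (n + 1) with hd
  have hd0 : ∀ n, 0 ≤ d n := fun n => by positivity
  -- series applied to y
  have h1 : HasSum (fun n => lam⁻¹ ^ (n + 1) • ((T ^ n) y)) (resolvent T lam y) := by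
    have := hsum_lam.mapL (ContinuousLinearMap.apply ℂ A y)
    simpa using this
  have h2 : HasSum (fun n => d n • ((T ^ n) y)) (resolvent T ((‖lam‖ : ℝ) : ℂ) y) := by
    have := hsum_r.mapL (ContinuousLinearMap.apply ℂ A y)
    simp only [ContinuousLinearMap.apply_apply, ContinuousLinearMap.smul_apply] at this
    have hfun2 : (fun n => d n • ((T ^ n) y)) =
        fun n => (((‖lam‖ : ℝ) : ℂ))⁻¹ ^ (n + 1) • ((T ^ n) y) := by
      funext n
      rw [hd, ← Complex.ofReal_inv, ← Complex.ofReal_pow, Complex.coe_smul]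
    rw [hfun2]
    exact this
  -- general building block
  have key : ∀ e : ℕ → ℝ, (∀ n, 0 ≤ e n) → (∀ n, e n ≤ d n) →
      HasSum (fun n => e n • ((T ^ n) y)) (∑' n, e n • ((T ^ n) y)) ∧
        ‖∑' n, e n • ((T ^ n) y)‖ ≤ ‖resolvent T ((‖lam‖ : ℝ) : ℂ) y‖ := by
    intro e he0 hed
    have hsummable : Summable (fun n => e n • ((T ^ n) y)) := by
      refine Summable.of_norm ?_
      refine Summable.of_nonneg_of_le (fun n => norm_nonneg _) (fun n => ?_)
        ((hnsum.mul_right ‖y‖).congr fun n => by rw [mul_assoc])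
      rw [norm_smul, Real.norm_of_nonneg (he0 n)]
      exact mul_le_mul (hed n) ((T ^ n).le_opNorm y) (norm_nonneg _) (hd0 n)
    have hz := hsummable.hasSum
    have hz0 : 0 ≤ ∑' n, e n • ((T ^ n) y) :=
      hasSum_le (fun n => smul_nonneg (he0 n) (ha n)) hasSum_zero hz
    have hzle : (∑' n, e n • ((T ^ n) y)) ≤ resolvent T ((‖lam‖ : ℝ) : ℂ) y :=
      hasSum_le (fun n => smul_le_smul_of_nonneg_right (hed n) (ha n)) hz h2
    exact ⟨hz, CStarAlgebra.norm_le_norm_of_nonneg_of_le hz0 hzle⟩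
  -- four coefficient sequences
  set c : ℕ → ℂ := fun n => lam⁻¹ ^ (n + 1) with hc
  have hcd : ∀ n, ‖c n‖ = d n := fun n => by
    rw [hc, hd]; simp [norm_pow]
  have habs : ∀ (t : ℝ) (n : ℕ), |t| ≤ ‖c n‖ → t⁺ ≤ d n ∧ t⁻ ≤ d n := by
    intro t n ht
    rw [hcd n] at ht
    exact ⟨le_trans (sup_le (le_abs_self t) (abs_nonneg t)) ht,
      le_trans (sup_le (neg_le_abs t) (abs_nonneg t)) ht⟩
  obtain ⟨hz1, hn1⟩ := key (fun n => ((c n).re)⁺) (fun n => posPart_nonneg _)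
    (fun n => (habs _ n (Complex.abs_re_le_norm _)).1)
  obtain ⟨hz2, hn2⟩ := key (fun n => ((c n).re)⁻) (fun n => negPart_nonneg _)
    (fun n => (habs _ n (Complex.abs_re_le_norm _)).2)
  obtain ⟨hz3, hn3⟩ := key (fun n => ((c n).im)⁺) (fun n => posPart_nonneg _)
    (fun n => (habs _ n (Complex.abs_im_le_norm _)).1)
  obtain ⟨hz4, hn4⟩ := key (fun n => ((c n).im)⁻) (fun n => negPart_nonneg _)
    (fun n => (habs _ n (Complex.abs_im_le_norm _)).2)
  -- recombine
  have scalar : ∀ (t : ℂ) (v : A),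
      t • v = (t.re⁺ • v - t.re⁻ • v) + Complex.I • (t.im⁺ • v - t.im⁻ • v) := by
    intro t v
    have h : t = ((↑t.re⁺ - ↑t.re⁻) + Complex.I * (↑t.im⁺ - ↑t.im⁻) : ℂ) := by
      rw [← Complex.ofReal_sub, ← Complex.ofReal_sub, posPart_sub_negPart,
        posPart_sub_negPart, mul_comm, Complex.re_add_im]
    calc t • v = ((↑t.re⁺ - ↑t.re⁻) + Complex.I * (↑t.im⁺ - ↑t.im⁻) : ℂ) • v := by rw [← h]
      _ = _ := by
        rw [add_smul, sub_smul, mul_smul, sub_smul]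
        simp only [Complex.coe_smul]
  have hcomb : HasSum (fun n => c n • ((T ^ n) y))
      ((∑' n, ((c n).re)⁺ • ((T ^ n) y)) - (∑' n, ((c n).re)⁻ • ((T ^ n) y)) +
        Complex.I • ((∑' n, ((c n).im)⁺ • ((T ^ n) y)) -
          (∑' n, ((c n).im)⁻ • ((T ^ n) y)))) := by
    have hs := (hz1.sub hz2).add ((hz3.sub hz4).const_smul Complex.I)
    have hfun : (fun n => c n • ((T ^ n) y)) = fun n =>
        (((c n).re)⁺ • ((T ^ n) y) - ((c n).re)⁻ • ((T ^ n) y)) +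
          Complex.I • (((c n).im)⁺ • ((T ^ n) y) - ((c n).im)⁻ • ((T ^ n) y)) :=
      funext fun n => scalar (c n) ((T ^ n) y)
    rw [hfun]
    exact hs
  have heq := h1.unique hcomb
  rw [heq]
  have hfinal : ‖(∑' n, ((c n).re)⁺ • ((T ^ n) y)) - (∑' n, ((c n).re)⁻ • ((T ^ n) y)) +
      Complex.I • ((∑' n, ((c n).im)⁺ • ((T ^ n) y)) -
        (∑' n, ((c n).im)⁻ • ((T ^ n) y)))‖ ≤ 4 * ‖resolvent T ((‖lam‖ : ℝ) : ℂ) y‖ := by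
    calc ‖(∑' n, ((c n).re)⁺ • ((T ^ n) y)) - (∑' n, ((c n).re)⁻ • ((T ^ n) y)) +
          Complex.I • ((∑' n, ((c n).im)⁺ • ((T ^ n) y)) -
            (∑' n, ((c n).im)⁻ • ((T ^ n) y)))‖
        ≤ ‖(∑' n, ((c n).re)⁺ • ((T ^ n) y)) - (∑' n, ((c n).re)⁻ • ((T ^ n) y))‖ +
            ‖Complex.I • ((∑' n, ((c n).im)⁺ • ((T ^ n) y)) -
              (∑' n, ((c n).im)⁻ • ((T ^ n) y)))‖ := norm_add_le _ _
      _ = ‖(∑' n, ((c n).re)⁺ • ((T ^ n) y)) - (∑' n, ((c n).re)⁻ • ((T ^ n) y))‖ +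
            ‖(∑' n, ((c n).im)⁺ • ((T ^ n) y)) - (∑' n, ((c n).im)⁻ • ((T ^ n) y))‖ := by
          rw [norm_smul, Complex.norm_I, one_mul]
      _ ≤ (‖∑' n, ((c n).re)⁺ • ((T ^ n) y)‖ + ‖∑' n, ((c n).re)⁻ • ((T ^ n) y)‖) +
            (‖∑' n, ((c n).im)⁺ • ((T ^ n) y)‖ + ‖∑' n, ((c n).im)⁻ • ((T ^ n) y)‖) := by
          gcongr <;> exact norm_sub_le _ _
      _ ≤ 4 * ‖resolvent T ((‖lam‖ : ℝ) : ℂ) y‖ := by linarith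
  refine hfinal.trans ?_
  have := (resolvent T ((‖lam‖ : ℝ) : ℂ)).le_opNorm y
  linarith

/-- Main theorem. -/
theorem norm_resolvent_le_of_positive'
    (T : A →L[ℂ] A) (hT : ∀ x : A, 0 ≤ x → 0 ≤ T x)
    (lam : ℂ) (hlam : spectralRadius ℂ T < (‖lam‖₊ : ENNReal)) :
    ‖resolvent T lam‖ ≤ 16 * ‖resolvent T ((‖lam‖ : ℝ) : ℂ)‖ := by
  refine ContinuousLinearMap.opNorm_le_bound _ (by positivity) fun x => ?_
  set x₁ : A := ((realPart x : A))⁺ with hx₁def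
  set x₂ : A := ((realPart x : A))⁻ with hx₂def
  set x₃ : A := ((imaginaryPart x : A))⁺ with hx₃def
  set x₄ : A := ((imaginaryPart x : A))⁻ with hx₄def
  have hxdecomp : x = (x₁ - x₂) + Complex.I • (x₃ - x₄) := by
    rw [hx₁def, hx₂def, hx₃def, hx₄def, CFC.posPart_sub_negPart _ (realPart x).2,
      CFC.posPart_sub_negPart _ (imaginaryPart x).2, realPart_add_I_smul_imaginaryPart]
  have hn1 : ‖x₁‖ ≤ ‖x‖ :=
    (aux_norm_posPart_le _ (realPart x).2).trans (aux_norm_realPart_le x)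
  have hn2 : ‖x₂‖ ≤ ‖x‖ :=
    (aux_norm_negPart_le _ (realPart x).2).trans (aux_norm_realPart_le x)
  have hn3 : ‖x₃‖ ≤ ‖x‖ :=
    (aux_norm_posPart_le _ (imaginaryPart x).2).trans (aux_norm_imaginaryPart_le x)
  have hn4 : ‖x₄‖ ≤ ‖x‖ :=
    (aux_norm_negPart_le _ (imaginaryPart x).2).trans (aux_norm_imaginaryPart_le x)
  have hp1 := aux_pos T hT lam hlam x₁ (CFC.posPart_nonneg _)
  have hp2 := aux_pos T hT lam hlam x₂ (CFC.negPart_nonneg _)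
  have hp3 := aux_pos T hT lam hlam x₃ (CFC.posPart_nonneg _)
  have hp4 := aux_pos T hT lam hlam x₄ (CFC.negPart_nonneg _)
  have happ : resolvent T lam x = (resolvent T lam x₁ - resolvent T lam x₂) +
      Complex.I • (resolvent T lam x₃ - resolvent T lam x₄) := by
    conv_lhs => rw [hxdecomp]
    rw [map_add, map_sub, map_smul, map_sub]
  rw [happ]
  have hR0 : (0:ℝ) ≤ ‖resolvent T ((‖lam‖ : ℝ) : ℂ)‖ := norm_nonneg _
  calc ‖(resolvent T lam x₁ - resolvent T lam x₂) +
        Complex.I • (resolvent T lam x₃ - resolvent T lam x₄)‖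
      ≤ ‖resolvent T lam x₁ - resolvent T lam x₂‖ +
          ‖Complex.I • (resolvent T lam x₃ - resolvent T lam x₄)‖ := norm_add_le _ _
    _ = ‖resolvent T lam x₁ - resolvent T lam x₂‖ +
          ‖resolvent T lam x₃ - resolvent T lam x₄‖ := by
        rw [norm_smul, Complex.norm_I, one_mul]
    _ ≤ (‖resolvent T lam x₁‖ + ‖resolvent T lam x₂‖) +
          (‖resolvent T lam x₃‖ + ‖resolvent T lam x₄‖) := by
        gcongr <;> exact norm_sub_le _ _
    _ ≤ 16 * ‖resolvent T ((‖lam‖ : ℝ) : ℂ)‖ * ‖x‖ := by nlinarith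

end CStar

/-- For a positive bounded operator `T` on a C*-algebra and `λ ∈ ℂ` with `|λ| > r(T)`,
one has `‖(λ - T)⁻¹‖ ≤ 16 ‖(|λ| - T)⁻¹‖`. -/
theorem norm_resolvent_le_of_positive
    {A : Type*} [NonUnitalCStarAlgebra A] [PartialOrder A] [StarOrderedRing A]
    (T : A →L[ℂ] A) (hT : ∀ x : A, 0 ≤ x → 0 ≤ T x)
    (lam : ℂ) (hlam : spectralRadius ℂ T < (‖lam‖₊ : ENNReal)) :
    ‖resolvent T lam‖ ≤ 16 * ‖resolvent T ((‖lam‖ : ℝ) : ℂ)‖ :=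
  norm_resolvent_le_of_positive' T hT lam hlam
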